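/- If the algebra A is strictly simple (f_A(...,a,...) > a in every argument), then GKBO and WPO coincide: s >_GKBO t iff s >_WPO t. -/

import Mathlib

/-- First-order terms over a signature `F` with arity function `ar`
and variables from `V`. -/
inductive Trm (F : Type) (ar : F → ℕ) (V : Type) : Type where
  | var : V → Trm F ar V
  | fn  : (f : F) → (Fin (ar f) → Trm F ar V) → Trm F ar V

variable {F V : Type} {ar : F → ℕ}

/-- Application of a substitution to a term. -/
def Trm.subst (θ : V → Trm F ar V) : Trm F ar V → Trm F ar V
  | .var x => θ x
  | .fn f ss => .fn f fun i => (ss i).subst θ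

/-- Strict part of a quasi-precedence. -/
def precGT (prec : F → F → Prop) (f g : F) : Prop := prec f g ∧ ¬ prec g f
/-- Equivalence part of a quasi-precedence. -/
def precEQ (prec : F → F → Prop) (f g : F) : Prop := prec f g ∧ prec g f

/-- Strict lexicographic extension of (GE, GT) to lists. -/
inductive LexGT {α : Type} (GE GT : α → α → Prop) : List α → List α → Prop
  | cons_nil {a l} : LexGT GE GT (a :: l) []
  | head {a b l m} : GT a b → LexGT GE GT (a :: l) (b :: m)
  | tail {a b l m} : GE a b → LexGT GE GT l m → LexGT GE GT (a :: l) (b :: m)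

/-- Weak lexicographic extension of (GE, GT) to lists. -/
inductive LexGE {α : Type} (GE GT : α → α → Prop) : List α → List α → Prop
  | nil {l} : LexGE GE GT l []
  | head {a b l m} : GT a b → LexGE GE GT (a :: l) (b :: m)
  | tail {a b l m} : GE a b → LexGE GE GT l m → LexGE GE GT (a :: l) (b :: m)

/-- The case analysis of the WPO definition, parameterized by the
lexicographic extension used (strict or weak). -/
def WPOCases (AGS AGT : Trm F ar V → Trm F ar V → Prop) (prec : F → F → Prop)
    (σ : ∀ f : F, List (Fin (ar f)))
    (GE GT : Trm F ar V → Trm F ar V → Prop)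
    (lex : List (Trm F ar V) → List (Trm F ar V) → Prop)
    (f : F) (ss : Fin (ar f) → Trm F ar V) (t : Trm F ar V) : Prop :=
  AGT (.fn f ss) t ∨
    (AGS (.fn f ss) t ∧
      ((∃ i ∈ σ f, GE (ss i) t) ∨
       (∃ g ts, t = Trm.fn g ts ∧ (∀ j ∈ σ g, GT (.fn f ss) (ts j)) ∧
         (precGT prec f g ∨ (precEQ prec f g ∧ lex ((σ f).map ss) ((σ g).map ts))))))

/-- The pair of relations (GE, GT) satisfies the defining equations of
the weighted path order, over term-level algebra orders AGS (weak) and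
AGT (strict), quasi-precedence `prec`, and (partial) status `σ`. -/
structure IsWPO (AGS AGT : Trm F ar V → Trm F ar V → Prop) (prec : F → F → Prop)
    (σ : ∀ f : F, List (Fin (ar f)))
    (GE GT : Trm F ar V → Trm F ar V → Prop) : Prop where
  ge_var : ∀ (x : V) (t : Trm F ar V), GE (.var x) t ↔ t = .var x
  gt_var : ∀ (x : V) (t : Trm F ar V), ¬ GT (.var x) t
  gt_fn : ∀ (f : F) (ss : Fin (ar f) → Trm F ar V) (t : Trm F ar V),
    GT (.fn f ss) t ↔ WPOCases AGS AGT prec σ GE GT (LexGT GE GT) f ss t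
  ge_fn : ∀ (f : F) (ss : Fin (ar f) → Trm F ar V) (t : Trm F ar V),
    GE (.fn f ss) t ↔ WPOCases AGS AGT prec σ GE GT (LexGE GE GT) f ss t

/-- A status is total iff each `σ f` is a permutation of all argument
positions of `f`. -/
def TotalStatus (σ : ∀ f : F, List (Fin (ar f))) : Prop :=
  ∀ f : F, (σ f).Perm (List.finRange (ar f))

/-- The case analysis of the GKBO definition: like WPO but without
case (2a) and without the recursive side condition in case (2b). -/
def GKBOCases (AGS AGT : Trm F ar V → Trm F ar V → Prop) (prec : F → F → Prop)
    (σ : ∀ f : F, List (Fin (ar f)))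
    (lex : List (Trm F ar V) → List (Trm F ar V) → Prop)
    (f : F) (ss : Fin (ar f) → Trm F ar V) (t : Trm F ar V) : Prop :=
  AGT (.fn f ss) t ∨
    (AGS (.fn f ss) t ∧
      ∃ g ts, t = Trm.fn g ts ∧
        (precGT prec f g ∨ (precEQ prec f g ∧ lex ((σ f).map ss) ((σ g).map ts))))

/-- The pair of relations (GE, GT) satisfies the defining equations of
the generalized Knuth-Bendix order. -/
structure IsGKBO (AGS AGT : Trm F ar V → Trm F ar V → Prop) (prec : F → F → Prop)
    (σ : ∀ f : F, List (Fin (ar f)))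
    (GE GT : Trm F ar V → Trm F ar V → Prop) : Prop where
  ge_var : ∀ (x : V) (t : Trm F ar V), GE (.var x) t ↔ t = .var x
  gt_var : ∀ (x : V) (t : Trm F ar V), ¬ GT (.var x) t
  gt_fn : ∀ (f : F) (ss : Fin (ar f) → Trm F ar V) (t : Trm F ar V),
    GT (.fn f ss) t ↔ GKBOCases AGS AGT prec σ (LexGT GE GT) f ss t
  ge_fn : ∀ (f : F) (ss : Fin (ar f) → Trm F ar V) (t : Trm F ar V),
    GE (.fn f ss) t ↔ GKBOCases AGS AGT prec σ (LexGE GE GT) f ss t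


/-- Size of a term. -/
def Trm.tsize : Trm F ar V → ℕ
  | .var _ => 1
  | .fn _ ss => 1 + Finset.univ.sum (fun i => (ss i).tsize)

lemma Trm.tsize_pos (s : Trm F ar V) : 0 < s.tsize := by
  cases s <;> simp [Trm.tsize]

lemma Trm.tsize_lt (f : F) (ss : Fin (ar f) → Trm F ar V) (i : Fin (ar f)) :
    (ss i).tsize < (Trm.fn f ss).tsize := by
  have h : (ss i).tsize ≤ Finset.univ.sum (fun j => (ss j).tsize) :=
    Finset.single_le_sum (f := fun j => (ss j).tsize) (fun j _ => Nat.zero_le _) (Finset.mem_univ i)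
  simp only [Trm.tsize]; omega

lemma lexGT_mono {α : Type} {GE GT GE' GT' : α → α → Prop} :
    ∀ {l m : List α}, LexGT GE GT l m →
      (∀ a ∈ l, ∀ b ∈ m, GT a b → GT' a b) →
      (∀ a ∈ l, ∀ b ∈ m, GE a b → GE' a b) → LexGT GE' GT' l m := by
  intro l m h
  induction h with
  | cons_nil => intro _ _; exact .cons_nil
  | @head a b l m h => intro hGT _; exact .head (hGT a (List.mem_cons_self) b (List.mem_cons_self) h)
  | @tail a b l m hge _ ih =>
      intro hGT hGE
      exact .tail (hGE a (List.mem_cons_self) b (List.mem_cons_self) hge)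
        (ih (fun x hx y hy => hGT x (List.mem_cons_of_mem _ hx) y (List.mem_cons_of_mem _ hy))
            (fun x hx y hy => hGE x (List.mem_cons_of_mem _ hx) y (List.mem_cons_of_mem _ hy)))

lemma lexGE_mono {α : Type} {GE GT GE' GT' : α → α → Prop} :
    ∀ {l m : List α}, LexGE GE GT l m →
      (∀ a ∈ l, ∀ b ∈ m, GT a b → GT' a b) →
      (∀ a ∈ l, ∀ b ∈ m, GE a b → GE' a b) → LexGE GE' GT' l m := by
  intro l m h
  induction h with
  | nil => intro _ _; exact .nil
  | @head a b l m h => intro hGT _; exact .head (hGT a (List.mem_cons_self) b (List.mem_cons_self) h)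
  | @tail a b l m hge _ ih =>
      intro hGT hGE
      exact .tail (hGE a (List.mem_cons_self) b (List.mem_cons_self) hge)
        (ih (fun x hx y hy => hGT x (List.mem_cons_of_mem _ hx) y (List.mem_cons_of_mem _ hy))
            (fun x hx y hy => hGE x (List.mem_cons_of_mem _ hx) y (List.mem_cons_of_mem _ hy)))

/-- If the algebra is strictly simple (`f_A(...,a,...) > a` in every
argument), then GKBO and WPO coincide: `s >_GKBO t` iff `s >_WPO t`. -/
theorem gkbo_eq_wpo_of_strictly_simple
    {F V : Type} {ar : F → ℕ}
    (AGS AGT : Trm F ar V → Trm F ar V → Prop) (prec : F → F → Prop)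
    (σ : ∀ f : F, List (Fin (ar f)))
    (GEw GTw GEg GTg : Trm F ar V → Trm F ar V → Prop)
    (hW : IsWPO AGS AGT prec σ GEw GTw)
    (hG : IsGKBO AGS AGT prec σ GEg GTg)
    (htot : TotalStatus σ)
    (hAGS_refl : Reflexive AGS)
    (hAGT_AGS : ∀ s t, AGT s t → AGS s t)
    (hcompat1 : ∀ s t u, AGS s t → AGT t u → AGT s u)
    (hcompat2 : ∀ s t u, AGT s t → AGS t u → AGT s u)
    (hstrict : ∀ (f : F) (ss : Fin (ar f) → Trm F ar V) (i : Fin (ar f)),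
        AGT (.fn f ss) (ss i)) :
    ∀ s t : Trm F ar V, GTg s t ↔ GTw s t := by

  have geW_AGS : ∀ s t : Trm F ar V, GEw s t → AGS s t := by
    intro s t h
    cases s with
    | var x =>
      rw [hW.ge_var] at h; rw [h]; exact hAGS_refl _
    | fn f ss =>
      rw [hW.ge_fn] at h
      rcases h with h | ⟨h, _⟩
      · exact hAGT_AGS _ _ h
      · exact h
  have key : ∀ n, ∀ s t : Trm F ar V, s.tsize + t.tsize ≤ n →
      ((GTg s t ↔ GTw s t) ∧ (GEg s t ↔ GEw s t)) := by
    intro n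
    induction n with
    | zero =>
      intro s t h
      have := s.tsize_pos; have := t.tsize_pos; omega
    | succ n ih =>
      intro s t hn
      constructor
      · -- GT
        cases s with
        | var x =>
          constructor
          · intro h; exact absurd h (hG.gt_var x t)
          · intro h; exact absurd h (hW.gt_var x t)
        | fn f ss =>
          constructor
          · intro h
            rw [hG.gt_fn] at h
            rcases h with h | ⟨hAGS, g, ts, rfl, hprec⟩
            · exact (hW.gt_fn f ss t).mpr (Or.inl h)
            · refine (hW.gt_fn f ss _).mpr (Or.inr ⟨hAGS, Or.inr ⟨g, ts, rfl, ?_, ?_⟩⟩)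
              · intro j _
                exact (hW.gt_fn f ss _).mpr (Or.inl (hcompat1 _ _ _ hAGS (hstrict g ts j)))
              · rcases hprec with h | ⟨heq, hlex⟩
                · exact Or.inl h
                · refine Or.inr ⟨heq, lexGT_mono hlex ?_ ?_⟩
                  · intro a ha b hb hab
                    obtain ⟨i, _, rfl⟩ := List.mem_map.mp ha
                    obtain ⟨j, _, rfl⟩ := List.mem_map.mp hb
                    have h1 := Trm.tsize_lt f ss i
                    have h2 := Trm.tsize_lt g ts j
                    exact ((ih _ _ (by omega)).1).mp hab
                  · intro a ha b hb hab
                    obtain ⟨i, _, rfl⟩ := List.mem_map.mp ha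
                    obtain ⟨j, _, rfl⟩ := List.mem_map.mp hb
                    have h1 := Trm.tsize_lt f ss i
                    have h2 := Trm.tsize_lt g ts j
                    exact ((ih _ _ (by omega)).2).mp hab
          · intro h
            rw [hW.gt_fn] at h
            rcases h with h | ⟨hAGS, ⟨i, _, hge⟩ | ⟨g, ts, rfl, _, hprec⟩⟩
            · exact (hG.gt_fn f ss t).mpr (Or.inl h)
            · exact (hG.gt_fn f ss t).mpr
                (Or.inl (hcompat2 _ _ _ (hstrict f ss i) (geW_AGS _ _ hge)))
            · refine (hG.gt_fn f ss _).mpr (Or.inr ⟨hAGS, g, ts, rfl, ?_⟩)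
              rcases hprec with h | ⟨heq, hlex⟩
              · exact Or.inl h
              · refine Or.inr ⟨heq, lexGT_mono hlex ?_ ?_⟩
                · intro a ha b hb hab
                  obtain ⟨i, _, rfl⟩ := List.mem_map.mp ha
                  obtain ⟨j, _, rfl⟩ := List.mem_map.mp hb
                  have h1 := Trm.tsize_lt f ss i
                  have h2 := Trm.tsize_lt g ts j
                  exact ((ih _ _ (by omega)).1).mpr hab
                · intro a ha b hb hab
                  obtain ⟨i, _, rfl⟩ := List.mem_map.mp ha
                  obtain ⟨j, _, rfl⟩ := List.mem_map.mp hb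
                  have h1 := Trm.tsize_lt f ss i
                  have h2 := Trm.tsize_lt g ts j
                  exact ((ih _ _ (by omega)).2).mpr hab
      · -- GE
        cases s with
        | var x =>
          rw [hG.ge_var, hW.ge_var]
        | fn f ss =>
          constructor
          · intro h
            rw [hG.ge_fn] at h
            rcases h with h | ⟨hAGS, g, ts, rfl, hprec⟩
            · exact (hW.ge_fn f ss t).mpr (Or.inl h)
            · refine (hW.ge_fn f ss _).mpr (Or.inr ⟨hAGS, Or.inr ⟨g, ts, rfl, ?_, ?_⟩⟩)
              · intro j _
                exact (hW.gt_fn f ss _).mpr (Or.inl (hcompat1 _ _ _ hAGS (hstrict g ts j)))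
              · rcases hprec with h | ⟨heq, hlex⟩
                · exact Or.inl h
                · refine Or.inr ⟨heq, lexGE_mono hlex ?_ ?_⟩
                  · intro a ha b hb hab
                    obtain ⟨i, _, rfl⟩ := List.mem_map.mp ha
                    obtain ⟨j, _, rfl⟩ := List.mem_map.mp hb
                    have h1 := Trm.tsize_lt f ss i
                    have h2 := Trm.tsize_lt g ts j
                    exact ((ih _ _ (by omega)).1).mp hab
                  · intro a ha b hb hab
                    obtain ⟨i, _, rfl⟩ := List.mem_map.mp ha
                    obtain ⟨j, _, rfl⟩ := List.mem_map.mp hb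
                    have h1 := Trm.tsize_lt f ss i
                    have h2 := Trm.tsize_lt g ts j
                    exact ((ih _ _ (by omega)).2).mp hab
          · intro h
            rw [hW.ge_fn] at h
            rcases h with h | ⟨hAGS, ⟨i, _, hge⟩ | ⟨g, ts, rfl, _, hprec⟩⟩
            · exact (hG.ge_fn f ss t).mpr (Or.inl h)
            · exact (hG.ge_fn f ss t).mpr
                (Or.inl (hcompat2 _ _ _ (hstrict f ss i) (geW_AGS _ _ hge)))
            · refine (hG.ge_fn f ss _).mpr (Or.inr ⟨hAGS, g, ts, rfl, ?_⟩)
              rcases hprec with h | ⟨heq, hlex⟩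
              · exact Or.inl h
              · refine Or.inr ⟨heq, lexGE_mono hlex ?_ ?_⟩
                · intro a ha b hb hab
                  obtain ⟨i, _, rfl⟩ := List.mem_map.mp ha
                  obtain ⟨j, _, rfl⟩ := List.mem_map.mp hb
                  have h1 := Trm.tsize_lt f ss i
                  have h2 := Trm.tsize_lt g ts j
                  exact ((ih _ _ (by omega)).1).mpr hab
                · intro a ha b hb hab
                  obtain ⟨i, _, rfl⟩ := List.mem_map.mp ha
                  obtain ⟨j, _, rfl⟩ := List.mem_map.mp hb
                  have h1 := Trm.tsize_lt f ss i
                  have h2 := Trm.tsize_lt g ts j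
                  exact ((ih _ _ (by omega)).2).mpr hab
  intro s t
  exact (key (s.tsize + t.tsize) s t le_rfl).1
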